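/- For any two absolutely continuous functions q, q' : [0,T] → ℝ satisfying the integral equation q_t = q_0 + ∫₀ᵗ λ_s ds - ∫₀ᵗ θ_s (q_s - k_s)⁺ ds - ∫₀ᵗ μ_s (q_s ⊓ k_s) ds with the same initial value q_0, we have q_t = q'_t for all t ∈ [0,T]. (Uniqueness of the fluid limit equation.) -/

import Mathlib

open MeasureTheory intervalIntegral

/-- The drift of the fluid limit equation. -/
private def Fdrift (lam θ μ k q : ℝ → ℝ) : ℝ → ℝ :=
  fun s => lam s - θ s * max (q s - k s) 0 - μ s * min (q s) (k s)

/-- One-sided comparison: since the drift is nonincreasing in the state,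
two solutions with the same initial value satisfy `q ≤ q'`. -/
private lemma fluid_le (T : ℝ) (lam θ μ k : ℝ → ℝ)
    (hθ0 : ∀ t ∈ Set.Icc (0:ℝ) T, 0 ≤ θ t)
    (hμ0 : ∀ t ∈ Set.Icc (0:ℝ) T, 0 ≤ μ t)
    (q q' : ℝ → ℝ)
    (hq : ContinuousOn q (Set.Icc 0 T)) (hq' : ContinuousOn q' (Set.Icc 0 T))
    (hF : IntegrableOn (Fdrift lam θ μ k q) (Set.Icc 0 T))
    (hF' : IntegrableOn (Fdrift lam θ μ k q') (Set.Icc 0 T))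
    (heq : ∀ t ∈ Set.Icc (0:ℝ) T,
      q t = q 0 + ∫ s in (0:ℝ)..t, Fdrift lam θ μ k q s)
    (heq' : ∀ t ∈ Set.Icc (0:ℝ) T,
      q' t = q' 0 + ∫ s in (0:ℝ)..t, Fdrift lam θ μ k q' s)
    (h0 : q 0 = q' 0) :
    ∀ t ∈ Set.Icc (0:ℝ) T, q t ≤ q' t := by
  intro t₀ ht₀
  by_contra hcon
  push_neg at hcon
  have h0T : (0:ℝ) ≤ T := le_trans ht₀.1 ht₀.2
  -- interval integrability on subintervals
  have hii : ∀ a b : ℝ, a ∈ Set.Icc (0:ℝ) T → b ∈ Set.Icc (0:ℝ) T → a ≤ b →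
      IntervalIntegrable (Fdrift lam θ μ k q) volume a b ∧
      IntervalIntegrable (Fdrift lam θ μ k q') volume a b := by
    intro a b ha hb hab
    have hsub : Set.uIcc a b ⊆ Set.Icc (0:ℝ) T := by
      rw [Set.uIcc_of_le hab]
      exact Set.Icc_subset_Icc ha.1 hb.2
    exact ⟨(hF.mono_set hsub).intervalIntegrable, (hF'.mono_set hsub).intervalIntegrable⟩
  -- last time before t₀ where q ≤ q'
  set S : Set ℝ := {t | t ∈ Set.Icc (0:ℝ) t₀ ∧ q t ≤ q' t} with hS
  have h0S : (0:ℝ) ∈ S := ⟨⟨le_rfl, ht₀.1⟩, le_of_eq h0⟩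
  have hSne : S.Nonempty := ⟨0, h0S⟩
  have hSbdd : BddAbove S := ⟨t₀, fun x hx => hx.1.2⟩
  set τ := sSup S with hτdef
  have hτle : τ ≤ t₀ := csSup_le hSne (fun x hx => hx.1.2)
  have hτ0 : (0:ℝ) ≤ τ := le_csSup hSbdd h0S
  have hτT : τ ∈ Set.Icc (0:ℝ) T := ⟨hτ0, hτle.trans ht₀.2⟩
  -- at τ, q τ ≤ q' τ, by continuity
  have hτS : q τ ≤ q' τ := by
    have hclos : τ ∈ closure S := csSup_mem_closure hSne hSbdd
    have hne : (nhdsWithin τ S).NeBot := mem_closure_iff_nhdsWithin_neBot.1 hclos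
    have hsubS : S ⊆ Set.Icc (0:ℝ) T := fun x hx => ⟨hx.1.1, hx.1.2.trans ht₀.2⟩
    have hcq : Filter.Tendsto q (nhdsWithin τ S) (nhds (q τ)) :=
      ((hq τ hτT).mono hsubS).tendsto
    have hcq' : Filter.Tendsto q' (nhdsWithin τ S) (nhds (q' τ)) :=
      ((hq' τ hτT).mono hsubS).tendsto
    exact le_of_tendsto_of_tendsto hcq hcq'
      (Filter.eventually_inf_principal.2 (Filter.Eventually.of_forall (fun x hx => hx.2)))
  -- on (τ, t₀], q' < q
  have hgt : ∀ s ∈ Set.Ioc τ t₀, q' s < q s := by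
    intro s hs
    by_contra hle
    push_neg at hle
    have : s ∈ S := ⟨⟨hτ0.trans hs.1.le, hs.2⟩, hle⟩
    exact absurd (le_csSup hSbdd this) (not_le.2 hs.1)
  -- the difference of drifts is nonpositive on (τ, t₀]
  have hnonpos : ∀ s ∈ Set.Ioc τ t₀,
      Fdrift lam θ μ k q s - Fdrift lam θ μ k q' s ≤ 0 := by
    intro s hs
    have hsT : s ∈ Set.Icc (0:ℝ) T := ⟨hτ0.trans hs.1.le, hs.2.trans ht₀.2⟩
    have hqs : q' s ≤ q s := (hgt s hs).le
    have h1 : max (q' s - k s) 0 ≤ max (q s - k s) 0 :=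
      max_le_max (by linarith) le_rfl
    have h2 : min (q' s) (k s) ≤ min (q s) (k s) := min_le_min hqs le_rfl
    have := mul_le_mul_of_nonneg_left h1 (hθ0 s hsT)
    have := mul_le_mul_of_nonneg_left h2 (hμ0 s hsT)
    simp only [Fdrift]
    linarith
  -- difference of the two integral equations between τ and t₀
  have hint : q t₀ - q' t₀ - (q τ - q' τ)
      = ∫ s in τ..t₀, (Fdrift lam θ μ k q s - Fdrift lam θ μ k q' s) := by
    have e1 := heq t₀ ht₀
    have e2 := heq τ hτT
    have e1' := heq' t₀ ht₀
    have e2' := heq' τ hτT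
    have i1 := (hii 0 t₀ ⟨le_rfl, h0T⟩ ht₀ ht₀.1).1
    have i2 := (hii 0 τ ⟨le_rfl, h0T⟩ hτT hτ0).1
    have i1' := (hii 0 t₀ ⟨le_rfl, h0T⟩ ht₀ ht₀.1).2
    have i2' := (hii 0 τ ⟨le_rfl, h0T⟩ hτT hτ0).2
    have j := (hii τ t₀ hτT ht₀ hτle).1
    have j' := (hii τ t₀ hτT ht₀ hτle).2
    rw [intervalIntegral.integral_sub j j',
      ← intervalIntegral.integral_interval_sub_left i1 i2,
      ← intervalIntegral.integral_interval_sub_left i1' i2']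
    rw [e1, e2, e1', e2']
    ring
  -- the integral is nonpositive
  have hIle : (∫ s in τ..t₀, (Fdrift lam θ μ k q s - Fdrift lam θ μ k q' s)) ≤ 0 := by
    rw [intervalIntegral.integral_of_le hτle]
    exact setIntegral_nonpos measurableSet_Ioc hnonpos
  have : q t₀ - q' t₀ ≤ q τ - q' τ := by linarith [hint ▸ hIle]
  linarith

theorem stmt_1 (T : ℝ) (hT : 0 < T) (lam θ μ k : ℝ → ℝ)
    (hlam : IntegrableOn lam (Set.Icc 0 T)) (hθ : IntegrableOn θ (Set.Icc 0 T))
    (hμ : IntegrableOn μ (Set.Icc 0 T))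
    (hlam0 : ∀ t ∈ Set.Icc (0:ℝ) T, 0 ≤ lam t)
    (hθ0 : ∀ t ∈ Set.Icc (0:ℝ) T, 0 ≤ θ t)
    (hμ0 : ∀ t ∈ Set.Icc (0:ℝ) T, 0 ≤ μ t)
    (hkm : Measurable k) (hk0 : ∀ t ∈ Set.Icc (0:ℝ) T, 0 ≤ k t)
    (M : ℝ) (hkb : ∀ t ∈ Set.Icc (0:ℝ) T, k t ≤ M)
    (q q' : ℝ → ℝ)
    (hq : ContinuousOn q (Set.Icc 0 T)) (hq' : ContinuousOn q' (Set.Icc 0 T))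
    (heq : ∀ t ∈ Set.Icc (0:ℝ) T,
      q t = q 0 + ∫ s in (0:ℝ)..t, (lam s - θ s * max (q s - k s) 0 - μ s * min (q s) (k s)))
    (heq' : ∀ t ∈ Set.Icc (0:ℝ) T,
      q' t = q' 0 + ∫ s in (0:ℝ)..t, (lam s - θ s * max (q' s - k s) 0 - μ s * min (q' s) (k s)))
    (h0 : q 0 = q' 0) :
    ∀ t ∈ Set.Icc (0:ℝ) T, q t = q' t := by
  have hMeas : MeasurableSet (Set.Icc (0:ℝ) T) := measurableSet_Icc
  have h0T : (0:ℝ) ≤ T := hT.le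
  have hM0 : (0:ℝ) ≤ M := (hk0 0 ⟨le_rfl, h0T⟩).trans (hkb 0 ⟨le_rfl, h0T⟩)
  -- integrability of the drifts
  have hdrift : ∀ (r : ℝ → ℝ), ContinuousOn r (Set.Icc 0 T) →
      IntegrableOn (Fdrift lam θ μ k r) (Set.Icc 0 T) := by
    intro r hr
    obtain ⟨C, hC⟩ := isCompact_Icc.exists_bound_of_continuousOn hr
    have hC0 : (0:ℝ) ≤ C := (norm_nonneg (r 0)).trans (hC 0 ⟨le_rfl, h0T⟩)
    have hrm : AEMeasurable r (volume.restrict (Set.Icc (0:ℝ) T)) :=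
      (hr.aemeasurable hMeas)
    have hw1 : AEStronglyMeasurable (fun s => max (r s - k s) 0)
        (volume.restrict (Set.Icc (0:ℝ) T)) :=
      ((hrm.sub hkm.aemeasurable).max aemeasurable_const).aestronglyMeasurable
    have hw2 : AEStronglyMeasurable (fun s => min (r s) (k s))
        (volume.restrict (Set.Icc (0:ℝ) T)) :=
      (hrm.min hkm.aemeasurable).aestronglyMeasurable
    have hb1 : ∀ᵐ s ∂(volume.restrict (Set.Icc (0:ℝ) T)),
        ‖max (r s - k s) 0‖ ≤ C + M := by
      refine (ae_restrict_iff' hMeas).2 (Filter.Eventually.of_forall fun s hs => ?_)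
      have h1 : ‖r s‖ ≤ C := hC s hs
      have h2 := hk0 s hs
      have h3 := hkb s hs
      rw [Real.norm_eq_abs] at h1 ⊢
      rw [abs_of_nonneg (le_max_right _ _)]
      have : r s - k s ≤ |r s| + 0 := by
        have := le_abs_self (r s); linarith
      exact max_le (by linarith) (by linarith)
    have hb2 : ∀ᵐ s ∂(volume.restrict (Set.Icc (0:ℝ) T)),
        ‖min (r s) (k s)‖ ≤ C + M := by
      refine (ae_restrict_iff' hMeas).2 (Filter.Eventually.of_forall fun s hs => ?_)
      have h1 : ‖r s‖ ≤ C := hC s hs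
      have h2 := hk0 s hs
      have h3 := hkb s hs
      rw [Real.norm_eq_abs] at h1 ⊢
      have := abs_min_le_max_abs_abs (a := r s) (b := k s)
      have hk : |k s| ≤ M := abs_le.2 ⟨by linarith, h3⟩
      exact (le_trans this (max_le (by linarith) (by linarith)))
    have hp1 : IntegrableOn (fun s => θ s * max (r s - k s) 0) (Set.Icc 0 T) := by
      have := Integrable.bdd_mul hθ (c := C + M) hw1 hb1
      simpa [mul_comm, IntegrableOn] using this
    have hp2 : IntegrableOn (fun s => μ s * min (r s) (k s)) (Set.Icc 0 T) := by
      have := Integrable.bdd_mul hμ (c := C + M) hw2 hb2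
      simpa [mul_comm, IntegrableOn] using this
    exact (hlam.sub hp1).sub hp2
  have hFq := hdrift q hq
  have hFq' := hdrift q' hq'
  intro t ht
  have hle := fluid_le T lam θ μ k hθ0 hμ0 q q' hq hq' hFq hFq' heq heq' h0 t ht
  have hge := fluid_le T lam θ μ k hθ0 hμ0 q' q hq' hq hFq' hFq heq' heq h0.symm t ht
  linarith
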